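/- If (G, D, u) is a left Hadamard group then (G^op, D, u) is a left Hadamard group, where G^op is the opposite group of G. -/

import Mathlib

/-- `(G, D, u)` is a left Hadamard group of order `8n`: `G` is a finite group of order
`8n`, `u` is a central involution, and `D` is a `4n`-subset with `|aD ∩ D| = 2n` for
`a ∉ ⟨u⟩ = {1, u}` and `|aD ∩ {b, bu}| = 1` for all `a, b ∈ G`. -/
def IsLeftHadamardGroup {G : Type*} [Group G] [Fintype G] [DecidableEq G]
    (n : ℕ) (D : Finset G) (u : G) : Prop :=
  Fintype.card G = 8 * n ∧ u ≠ 1 ∧ u * u = 1 ∧ (∀ g : G, g * u = u * g) ∧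
  D.card = 4 * n ∧
  (∀ a : G, a ≠ 1 → a ≠ u → ((D.image (fun d => a * d)) ∩ D).card = 2 * n) ∧
  (∀ a b : G, ((D.image (fun d => a * d)) ∩ ({b, b * u} : Finset G)).card = 1)

instance {G : Type*} [Fintype G] : Fintype Gᵐᵒᵖ :=
  Fintype.ofEquiv G MulOpposite.opEquiv

instance {G : Type*} [DecidableEq G] : DecidableEq Gᵐᵒᵖ :=
  fun a b => decidable_of_iff (a.unop = b.unop) MulOpposite.unop_injective.eq_iff

open Finset Matrix

private lemma exactly_one {G : Type*} [Group G] [Fintype G] [DecidableEq G]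
    {n : ℕ} {D : Finset G} {u : G} (h : IsLeftHadamardGroup n D u) :
    ∀ x : G, x ∈ D ↔ x * u ∉ D := by
  obtain ⟨hcard, hu1, huu, hcomm, hD, hleft, hpair⟩ := h
  intro x
  have h0 := hpair 1 x
  have himg : D.image (fun d => (1:G) * d) = D := by
    simp
  rw [himg] at h0
  obtain ⟨c, hc⟩ := Finset.card_eq_one.mp h0
  constructor
  · intro hxD hxuD
    have h1 : x ∈ ({c} : Finset G) := hc ▸ (Finset.mem_inter.mpr ⟨hxD, by simp⟩)
    have h2 : x * u ∈ ({c} : Finset G) := hc ▸ (Finset.mem_inter.mpr ⟨hxuD, by simp⟩)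
    rw [Finset.mem_singleton] at h1 h2
    exact hu1 (mul_eq_left.mp (h2.trans h1.symm))
  · intro hxuD
    by_contra hxD
    have hcm : c ∈ D ∩ ({x, x * u} : Finset G) := hc ▸ Finset.mem_singleton_self c
    rw [Finset.mem_inter, Finset.mem_insert, Finset.mem_singleton] at hcm
    rcases hcm with ⟨hcD, rfl | rfl⟩
    · exact hxD hcD
    · exact hxuD hcD


private lemma matrix_flip {ι : Type*} [Fintype ι] [DecidableEq ι] (c : ℝ) (hc : 0 < c)
    (M P : Matrix ι ι ℝ) (hMMT : M * Mᵀ = c • (1 - P)) (hPM : P * M = -M) (hMP : M * P = -M)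
    (hPP : P * P = 1) (hPT : Pᵀ = P) : Mᵀ * M = c • (1 - P) := by
  set F : Matrix ι ι ℝ := (1/2 : ℝ) • (1 + P) with hF
  have hPMT : P * Mᵀ = -Mᵀ := by
    have := congrArg Matrix.transpose hMP
    rwa [Matrix.transpose_mul, hPT, Matrix.transpose_neg] at this
  have hMTP : Mᵀ * P = -Mᵀ := by
    have := congrArg Matrix.transpose hPM
    rwa [Matrix.transpose_mul, hPT, Matrix.transpose_neg] at this
  have hMF : M * F = 0 := by
    rw [hF, Matrix.mul_smul, Matrix.mul_add, Matrix.mul_one, hMP]; simp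
  have hFM : F * M = 0 := by
    rw [hF, Matrix.smul_mul, Matrix.add_mul, Matrix.one_mul, hPM]; simp
  have hFMT : F * Mᵀ = 0 := by
    rw [hF, Matrix.smul_mul, Matrix.add_mul, Matrix.one_mul, hPMT]; simp
  have hMTF : Mᵀ * F = 0 := by
    rw [hF, Matrix.mul_smul, Matrix.mul_add, Matrix.mul_one, hMTP]; simp
  have hFT : Fᵀ = F := by
    rw [hF, Matrix.transpose_smul, Matrix.transpose_add, Matrix.transpose_one, hPT]
  have hFF : F * F = F := by
    have h1 : (1 + P) * (1 + P) = (2:ℝ) • (1 + P) := by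
      rw [add_mul, one_mul, mul_add, mul_one, hPP]; module
    rw [hF, Matrix.smul_mul, Matrix.mul_smul, h1]; module
  set t : ℝ := Real.sqrt (2 * c) with ht
  have ht2 : t * t = 2 * c := Real.mul_self_sqrt (by positivity)
  set N : Matrix ι ι ℝ := M + t • F with hN
  have hNT : Nᵀ = Mᵀ + t • F := by rw [hN, Matrix.transpose_add, Matrix.transpose_smul, hFT]
  have e1 : M * (t • F) = 0 := by rw [Matrix.mul_smul, hMF, smul_zero]
  have e2 : (t • F) * Mᵀ = 0 := by rw [Matrix.smul_mul, hFMT, smul_zero]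
  have e3 : (t • F) * (t • F) = (2*c) • F := by
    rw [Matrix.smul_mul, Matrix.mul_smul, hFF, smul_smul, ht2]
  have hNNT : N * Nᵀ = (2 * c) • (1 : Matrix ι ι ℝ) := by
    rw [hN, hNT, Matrix.add_mul, Matrix.mul_add, Matrix.mul_add, hMMT, e1, e2, e3, hF]
    module
  have hc2 : (2*c) ≠ 0 := by positivity
  have hNTN : Nᵀ * N = (2*c) • (1 : Matrix ι ι ℝ) := by
    have h1 : N * ((2*c)⁻¹ • Nᵀ) = 1 := by
      rw [Matrix.mul_smul, hNNT, smul_smul, inv_mul_cancel₀ hc2, one_smul]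
    have h2 := mul_eq_one_comm.mp h1
    calc Nᵀ * N = (2*c) • (((2*c)⁻¹ • Nᵀ) * N) := by
          rw [Matrix.smul_mul, smul_smul, mul_inv_cancel₀ hc2, one_smul]
      _ = (2*c) • (1 : Matrix ι ι ℝ) := by rw [h2]
  have e4 : Mᵀ * (t • F) = 0 := by rw [Matrix.mul_smul, hMTF, smul_zero]
  have e5 : (t • F) * M = 0 := by rw [Matrix.smul_mul, hFM, smul_zero]
  have hexp : Nᵀ * N = Mᵀ * M + (2*c) • F := by
    rw [hNT, hN, Matrix.add_mul, Matrix.mul_add, Matrix.mul_add, e4, e5, e3]; abel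
  have hfin : Mᵀ * M + (2*c) • F = (2*c) • (1 : Matrix ι ι ℝ) := by rw [← hexp, hNTN]
  have hgoal : Mᵀ * M = (2*c) • (1 : Matrix ι ι ℝ) - (2*c) • F := by
    rw [← hfin]; abel
  rw [hgoal, hF]; module


private def chi {G : Type*} [DecidableEq G] (D : Finset G) : G → ℝ :=
  fun x => if x ∈ D then 1 else -1

private lemma corr_formula {G : Type*} [Fintype G] [DecidableEq G] (D : Finset G) (f : G ≃ G) :
    ∑ x : G, chi D x * chi D (f x)
      = 4 * ((univ.filter fun x => x ∈ D ∧ f x ∈ D).card : ℝ)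
        - 2 * (D.card : ℝ) - 2 * (D.card : ℝ) + (Fintype.card G : ℝ) := by
  have hpt : ∀ x : G, chi D x * chi D (f x)
      = 4 * (if x ∈ D ∧ f x ∈ D then (1:ℝ) else 0)
        - 2 * (if x ∈ D then (1:ℝ) else 0) - 2 * (if f x ∈ D then (1:ℝ) else 0) + 1 := by
    intro x
    unfold chi
    by_cases h1 : x ∈ D <;> by_cases h2 : f x ∈ D <;> simp [h1, h2] <;> norm_num
  rw [Finset.sum_congr rfl fun x _ => hpt x]
  rw [Finset.sum_add_distrib, Finset.sum_sub_distrib, Finset.sum_sub_distrib,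
    ← Finset.mul_sum, ← Finset.mul_sum, ← Finset.mul_sum]
  have h3 : ∑ x : G, (if f x ∈ D then (1:ℝ) else 0) = ∑ y : G, (if y ∈ D then (1:ℝ) else 0) :=
    Fintype.sum_equiv f _ _ (fun x => rfl)
  rw [h3, Finset.sum_boole, Finset.sum_boole]
  have h4 : univ.filter (fun y : G => y ∈ D) = D := by
    ext y; simp
  rw [h4]
  norm_num [Finset.card_univ, Finset.sum_const]


private lemma key {G : Type*} [Group G] [Fintype G] [DecidableEq G]
    {n : ℕ} {D : Finset G} {u : G} (h : IsLeftHadamardGroup n D u) :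
    ∀ a : G, a ≠ 1 → a ≠ u → (univ.filter fun x => x ∈ D ∧ x * a ∈ D).card = 2 * n := by
  have hx1 := exactly_one h
  obtain ⟨hcard, hu1, huu, hcomm, hD, hleft, hpair⟩ := h
  have hn : 0 < n := by
    have := Fintype.card_pos (α := G)
    omega
  have hnR : (0:ℝ) < (n:ℝ) := by exact_mod_cast hn
  have huinv : u⁻¹ = u := inv_eq_of_mul_eq_one_right huu
  have hchiu : ∀ x : G, chi D (x * u) = - chi D x := by
    intro x
    unfold chi
    by_cases hx : x ∈ D
    · rw [if_pos hx, if_neg ((hx1 x).mp hx)]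
    · have hxu : x * u ∈ D := by
        by_contra hxu
        exact hx ((hx1 x).mpr hxu)
      rw [if_neg hx, if_pos hxu, neg_neg]
  have hchisq : ∀ x : G, chi D x * chi D x = 1 := by
    intro x; unfold chi; by_cases hx : x ∈ D <;> simp [hx]
  -- correlation values
  have corrAll : ∀ a : G, ∑ x : G, chi D x * chi D (a * x)
      = if a = 1 then ((8:ℝ) * n) else if a = u then -((8:ℝ) * n) else 0 := by
    intro a
    by_cases ha1 : a = 1
    · subst ha1
      rw [if_pos rfl]
      simp only [one_mul]
      rw [Finset.sum_congr rfl fun x _ => hchisq x]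
      rw [Finset.sum_const, Finset.card_univ, hcard]
      ring
    by_cases hau : a = u
    · subst hau
      rw [if_neg ha1, if_pos rfl]
      have hterm : ∀ x : G, chi D x * chi D (a * x) = -1 := by
        intro x
        rw [← hcomm x, hchiu x, mul_neg, hchisq x]
      rw [Finset.sum_congr rfl fun x _ => hterm x]
      rw [Finset.sum_const, Finset.card_univ, hcard]
      ring
    · rw [if_neg ha1, if_neg hau]
      have hinv1 : a⁻¹ ≠ 1 := fun hh => ha1 (by rwa [inv_eq_one] at hh)
      have hinvu : a⁻¹ ≠ u := fun hh => hau (by rw [← huinv, ← hh, inv_inv])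
      have h2 := hleft a⁻¹ hinv1 hinvu
      have hset : (D.image fun d => a⁻¹ * d) ∩ D = univ.filter fun y => y ∈ D ∧ a * y ∈ D := by
        ext y
        simp only [Finset.mem_inter, Finset.mem_image, Finset.mem_filter, Finset.mem_univ,
          true_and]
        constructor
        · rintro ⟨⟨d, hd, rfl⟩, hyD⟩
          exact ⟨hyD, by rwa [mul_inv_cancel_left]⟩
        · rintro ⟨hyD, hay⟩
          exact ⟨⟨a * y, hay, by rw [inv_mul_cancel_left]⟩, hyD⟩
      rw [hset] at h2
      have hf : ∑ x : G, chi D x * chi D (a * x) = 4 * ((univ.filter fun x => x ∈ D ∧ a * x ∈ D).card : ℝ) - 2 * (D.card : ℝ) - 2 * (D.card : ℝ) + (Fintype.card G : ℝ) :=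
        corr_formula D (Equiv.mulLeft a)
      rw [h2, hcard, hD] at hf
      rw [hf]; push_cast; ring
  -- matrices
  set M : Matrix G G ℝ := Matrix.of (fun x y => chi D (x * y)) with hMdef
  set P : Matrix G G ℝ := Matrix.of (fun x y => if y = u * x then (1:ℝ) else 0) with hPdef
  have hMap : ∀ x y : G, M x y = chi D (x * y) := fun x y => rfl
  have hPap : ∀ x y : G, P x y = if y = u * x then (1:ℝ) else 0 := fun x y => rfl
  have hPM : P * M = -M := by
    ext x y
    rw [Matrix.mul_apply, Matrix.neg_apply, hMap]
    have : ∀ z : G, P x z * M z y = if z = u * x then chi D (z * y) else 0 := by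
      intro z
      rw [hPap, hMap, ite_mul, one_mul, zero_mul]
    rw [Finset.sum_congr rfl fun z _ => this z, Finset.sum_ite_eq' univ (u * x),
      if_pos (Finset.mem_univ _)]
    rw [mul_assoc, ← hcomm (x * y), hchiu]
  have hMP : M * P = -M := by
    ext x y
    rw [Matrix.mul_apply, Matrix.neg_apply, hMap]
    have : ∀ z : G, M x z * P z y = if z = u * y then chi D (x * z) else 0 := by
      intro z
      rw [hPap, hMap, mul_ite, mul_one, mul_zero]
      congr 1
      have : (y = u * z) = (z = u * y) := by
        apply propext
        constructor
        · rintro rfl; rw [← mul_assoc, huu, one_mul]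
        · rintro rfl; rw [← mul_assoc, huu, one_mul]
      rw [this]
    rw [Finset.sum_congr rfl fun z _ => this z, Finset.sum_ite_eq' univ (u * y),
      if_pos (Finset.mem_univ _)]
    rw [← mul_assoc, hcomm x, mul_assoc, ← hcomm (x * y), hchiu]
  have hPP : P * P = 1 := by
    ext x y
    rw [Matrix.mul_apply, Matrix.one_apply]
    have : ∀ z : G, P x z * P z y = if z = u * x then (if y = u * z then (1:ℝ) else 0) else 0 := by
      intro z
      rw [hPap, hPap, ite_mul, one_mul, zero_mul]
    rw [Finset.sum_congr rfl fun z _ => this z, Finset.sum_ite_eq' univ (u * x),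
      if_pos (Finset.mem_univ _)]
    rw [← mul_assoc, huu, one_mul]
    by_cases hxy : x = y <;> simp [hxy, eq_comm]
  have hPT : Pᵀ = P := by
    ext x y
    rw [Matrix.transpose_apply, hPap, hPap]
    congr 1
    apply propext
    constructor
    · rintro rfl; rw [← mul_assoc, huu, one_mul]
    · rintro rfl; rw [← mul_assoc, huu, one_mul]
  have hMMT : M * Mᵀ = ((8:ℝ) * n) • (1 - P) := by
    ext x x'
    rw [Matrix.mul_apply]
    have hterm : ∀ y : G, M x y * Mᵀ y x' = chi D (x * y) * chi D (x' * y) := by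
      intro y; rw [Matrix.transpose_apply, hMap, hMap]
    rw [Finset.sum_congr rfl fun y _ => hterm y]
    have hsum : ∑ y : G, chi D (x * y) * chi D (x' * y)
        = ∑ z : G, chi D z * chi D ((x' * x⁻¹) * z) := by
      apply Fintype.sum_equiv (Equiv.mulLeft x)
      intro y
      simp only [Equiv.coe_mulLeft]
      congr 2
      rw [mul_assoc, inv_mul_cancel_left]
    rw [hsum, corrAll]
    rw [Matrix.smul_apply, Matrix.sub_apply, Matrix.one_apply, hPap]
    by_cases h1 : x' = x
    · subst h1
      rw [if_pos (mul_inv_cancel x'), if_pos rfl]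
      have : ¬ (x' = u * x') := fun hh => hu1 (mul_eq_right.mp hh.symm)
      rw [if_neg this]
      simp
    · have hne1 : x' * x⁻¹ ≠ 1 := fun hh => h1 (by
        have := congrArg (· * x) hh
        simpa [mul_assoc] using this)
      rw [if_neg hne1]
      have hxx : ¬ (x = x') := fun hh => h1 hh.symm
      by_cases h2 : x' = u * x
      · have : x' * x⁻¹ = u := by rw [h2, mul_assoc, mul_inv_cancel, mul_one]
        rw [if_pos this, if_neg hxx, if_pos h2]
        simp
      · have : x' * x⁻¹ ≠ u := fun hh => h2 (by
          have := congrArg (· * x) hh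
          simpa [mul_assoc] using this)
        rw [if_neg this, if_neg hxx, if_neg h2]
        simp
  have hpos : (0:ℝ) < (8:ℝ) * n := by linarith
  have hflip := matrix_flip ((8:ℝ) * n) hpos M P hMMT hPM hMP hPP hPT
  -- extraction
  intro a ha1 hau
  have hentry := Matrix.ext_iff.mpr hflip 1 a
  rw [Matrix.mul_apply] at hentry
  have hterm : ∀ x : G, Mᵀ 1 x * M x a = chi D x * chi D (x * a) := by
    intro x; rw [Matrix.transpose_apply, hMap, hMap, mul_one]
  rw [Finset.sum_congr rfl fun x _ => hterm x] at hentry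
  rw [Matrix.smul_apply, Matrix.sub_apply, Matrix.one_apply, hPap] at hentry
  rw [if_neg (fun hh : (1:G) = a => ha1 hh.symm), if_neg (by rwa [mul_one])] at hentry
  rw [sub_zero, smul_zero] at hentry
  have hf : ∑ x : G, chi D x * chi D (x * a) = 4 * ((univ.filter fun x => x ∈ D ∧ x * a ∈ D).card : ℝ) - 2 * (D.card : ℝ) - 2 * (D.card : ℝ) + (Fintype.card G : ℝ) :=
    corr_formula D (Equiv.mulRight a)
  rw [hentry, hcard, hD] at hf
  have hBR : ((univ.filter fun x => x ∈ D ∧ x * a ∈ D).card : ℝ) = 2 * n := by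
    push_cast at hf ⊢
    linarith
  exact_mod_cast hBR

/-- If `(G, D, u)` is a left Hadamard group then `(Gᵒᵖ, D, u)` is a left Hadamard group. -/
theorem stmt_8 {G : Type*} [Group G] [Fintype G] [DecidableEq G]
    (n : ℕ) (D : Finset G) (u : G)
    (h : IsLeftHadamardGroup n D u) :
    IsLeftHadamardGroup n (D.image (MulOpposite.op : G → Gᵐᵒᵖ)) (MulOpposite.op u) := by
  have hkey := key h
  have hx1 := exactly_one h
  obtain ⟨hcard, hu1, huu, hcomm, hD, hleft, hpair⟩ := h
  have huinv : u⁻¹ = u := inv_eq_of_mul_eq_one_right huu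
  have hinj : Function.Injective (MulOpposite.op : G → Gᵐᵒᵖ) := MulOpposite.op_injective
  -- the image of a left translate in the opposite group
  have himg : ∀ a' : Gᵐᵒᵖ, (D.image (MulOpposite.op : G → Gᵐᵒᵖ)).image (fun d => a' * d)
      = (D.image (fun d => d * a'.unop)).image (MulOpposite.op : G → Gᵐᵒᵖ) := by
    intro a'
    rw [Finset.image_image, Finset.image_image]
    apply Finset.image_congr
    intro d _
    simp only [Function.comp_apply]
    apply MulOpposite.unop_injective
    simp
  refine ⟨?_, ?_, ?_, ?_, ?_, ?_, ?_⟩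
  · rw [Fintype.card_congr (MulOpposite.opEquiv (α := G)).symm]
    exact hcard
  · intro hop
    exact hu1 (MulOpposite.op_injective (by simpa using hop))
  · rw [← MulOpposite.op_mul, huu, MulOpposite.op_one]
  · intro g
    apply MulOpposite.unop_injective
    rw [MulOpposite.unop_mul, MulOpposite.unop_mul, MulOpposite.unop_op]
    exact (hcomm g.unop).symm
  · rw [Finset.card_image_of_injective _ hinj]
    exact hD
  · intro a' ha1 hau
    set a : G := a'.unop with hadef
    have ha1' : a ≠ 1 := fun hh => ha1 (by
      rw [← MulOpposite.op_unop a', ← hadef, hh, MulOpposite.op_one])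
    have hau' : a ≠ u := fun hh => hau (by rw [← MulOpposite.op_unop a', ← hadef, hh])
    rw [himg a', ← Finset.image_inter _ _ hinj, Finset.card_image_of_injective _ hinj]
    have hset : (D.image fun d => d * a) ∩ D
        = (univ.filter fun x => x ∈ D ∧ x * a ∈ D).image (fun x => x * a) := by
      ext y
      simp only [Finset.mem_inter, Finset.mem_image, Finset.mem_filter, Finset.mem_univ,
        true_and]
      constructor
      · rintro ⟨⟨d, hd, rfl⟩, hyD⟩
        exact ⟨d, ⟨hd, hyD⟩, rfl⟩
      · rintro ⟨x, ⟨hxD, hxa⟩, rfl⟩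
        exact ⟨⟨x, hxD, rfl⟩, hxa⟩
    rw [hset, Finset.card_image_of_injective _ (mul_left_injective a)]
    exact hkey a ha1' hau'
  · intro a' b'
    set a : G := a'.unop with hadef
    set b : G := b'.unop with hbdef
    have hpairop : ({b', b' * MulOpposite.op u} : Finset Gᵐᵒᵖ)
        = ({b, b * u} : Finset G).image (MulOpposite.op : G → Gᵐᵒᵖ) := by
      rw [Finset.image_insert, Finset.image_singleton]
      have e1 : b' = MulOpposite.op b := by rw [hbdef, MulOpposite.op_unop]
      have e2 : b' * MulOpposite.op u = MulOpposite.op (b * u) := by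
        apply MulOpposite.unop_injective
        rw [MulOpposite.unop_mul, MulOpposite.unop_op, MulOpposite.unop_op, ← hbdef]
        exact (hcomm b).symm
      rw [e2, e1]
    rw [himg a', hpairop, ← Finset.image_inter _ _ hinj, Finset.card_image_of_injective _ hinj]
    -- now a statement purely in G
    have hmb : ∀ y : G, y ∈ D.image (fun d => d * a) ↔ y * a⁻¹ ∈ D := by
      intro y
      simp only [Finset.mem_image]
      constructor
      · rintro ⟨d, hd, rfl⟩; rwa [mul_inv_cancel_right]
      · intro hy; exact ⟨y * a⁻¹, hy, by rw [inv_mul_cancel_right]⟩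
    have hbu : b * u * a⁻¹ = (b * a⁻¹) * u := by
      have : u * a⁻¹ = a⁻¹ * u := by
        have := hcomm a⁻¹
        rw [this]
      rw [mul_assoc, this, ← mul_assoc]
    by_cases hbd : b * a⁻¹ ∈ D
    · have h1 : b ∈ D.image (fun d => d * a) := (hmb b).mpr hbd
      have h2 : b * u ∉ D.image (fun d => d * a) := by
        rw [hmb, hbu]
        exact (hx1 (b * a⁻¹)).mp hbd
      have : (D.image fun d => d * a) ∩ ({b, b * u} : Finset G) = {b} := by
        ext y
        simp only [Finset.mem_inter, Finset.mem_insert, Finset.mem_singleton]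
        constructor
        · rintro ⟨hyS, rfl | rfl⟩
          · exact rfl
          · exact absurd hyS h2
        · rintro rfl; exact ⟨h1, Or.inl rfl⟩
      rw [this, Finset.card_singleton]
    · have hbud : (b * a⁻¹) * u ∈ D := by
        by_contra hh
        exact hbd ((hx1 (b * a⁻¹)).mpr hh)
      have h1 : b ∉ D.image (fun d => d * a) := by rw [hmb]; exact hbd
      have h2 : b * u ∈ D.image (fun d => d * a) := by rw [hmb, hbu]; exact hbud
      have : (D.image fun d => d * a) ∩ ({b, b * u} : Finset G) = {b * u} := by
        ext y
        simp only [Finset.mem_inter, Finset.mem_insert, Finset.mem_singleton]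
        constructor
        · rintro ⟨hyS, rfl | rfl⟩
          · exact absurd hyS h1
          · exact rfl
        · rintro rfl; exact ⟨h2, Or.inr rfl⟩
      rw [this, Finset.card_singleton]
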